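/- Let F₂ be the free group on generators a, b with word-length metric d. Let Y be the set of reduced words beginning with a or a⁻¹, and Z = F₂ \ Y. Then for all y ∈ Y and z ∈ Z, d(ab·y, a²·z) = d(y,z) + 2. -/

import Mathlib

/-- The generator `a` of the free group `F₂`. -/
def a : FreeGroup (Fin 2) := FreeGroup.of 0

/-- The generator `b` of the free group `F₂`. -/
def b : FreeGroup (Fin 2) := FreeGroup.of 1

/-- `Y`: the set of (nonempty) reduced words whose first letter is `a` or `a⁻¹`. -/
def Yset : Set (FreeGroup (Fin 2)) := {w | ∃ t : Bool, w.toWord.head? = some (0, t)}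

/-- no-cancellation relation between adjacent letters -/
def Rnc {α : Type*} (x y : α × Bool) : Prop := ¬(x.1 = y.1 ∧ x.2 = !y.2)

lemma reduce_eq_self_of_chain' {α : Type*} [DecidableEq α] :
    ∀ (L : List (α × Bool)), L.Chain' Rnc → FreeGroup.reduce L = L := by
  intro L
  induction L with
  | nil => intro _; rfl
  | cons x L ih =>
    intro h
    rw [List.Chain', List.isChain_cons] at h
    rw [FreeGroup.reduce.cons, ih h.2]
    cases L with
    | nil => rfl
    | cons hd tl =>
      have hR : Rnc x hd := h.1 hd rfl
      simp only [Rnc] at hR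
      simp [hR]

lemma chain'_of_reduce_eq_self {α : Type*} [DecidableEq α] :
    ∀ (L : List (α × Bool)), FreeGroup.reduce L = L → L.Chain' Rnc := by
  intro L
  induction L with
  | nil => intro _; simp [List.Chain']
  | cons x L ih =>
    intro h
    rw [FreeGroup.reduce.cons] at h
    have hlen : (FreeGroup.reduce L).length ≤ L.length :=
      (FreeGroup.Red.sublist (FreeGroup.reduce.red)).length_le
    rcases hL : FreeGroup.reduce L with _ | ⟨hd, tl⟩
    · rw [hL] at h
      simp only [List.cons.injEq] at h
      rw [← h.2]
      simp [List.Chain']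
    · rw [hL] at h hlen
      replace h : (if x.1 = hd.1 ∧ x.2 = !hd.2 then tl else x :: hd :: tl) = x :: L := h
      by_cases hc : x.1 = hd.1 ∧ x.2 = !hd.2
      · rw [if_pos hc] at h
        have := congrArg List.length h
        simp at this hlen
        omega
      · rw [if_neg hc] at h
        simp only [List.cons.injEq, true_and] at h
        have hLeq : L = hd :: tl := h.symm
        have hred : FreeGroup.reduce L = L := by rw [hL, hLeq]
        have := ih hred
        rw [List.Chain', List.isChain_cons]
        refine ⟨?_, this⟩
        intro y hy
        rw [hLeq] at hy
        simp at hy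
        exact hy ▸ hc

lemma norm_of_chain' {α : Type*} [DecidableEq α] (L : List (α × Bool))
    (h : L.Chain' Rnc) : (FreeGroup.mk L).norm = L.length := by
  unfold FreeGroup.norm
  rw [FreeGroup.toWord_mk, reduce_eq_self_of_chain' L h]

/-- for `y ∈ Y` and `z ∉ Yset`,
`d(ab·y, a²·z) = d(y, z) + 2`, where `d(g, h) = |g⁻¹h|` is the word metric. -/
theorem stmt8 : ∀ y ∈ Yset, ∀ z ∉ Yset,
    ((a * b * y)⁻¹ * (a * a * z)).norm = (y⁻¹ * z).norm + 2 := by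
  intro y hy z hz
  obtain ⟨t, ht⟩ := hy
  set A := (y⁻¹).toWord with hAdef
  set B := z.toWord with hBdef
  -- last letter of A
  have hA_inv : A = FreeGroup.invRev y.toWord := FreeGroup.toWord_inv y
  have hlastA : A.getLast? = some (0, !t) := by
    rw [hA_inv]
    unfold FreeGroup.invRev
    rw [List.getLast?_reverse, List.head?_map, ht]
    rfl
  -- head of B is not a-letter
  have hheadB : ∀ p ∈ B.head?, p.1 ≠ (0 : Fin 2) := by
    intro p hp h0
    exact hz ⟨p.2, by rw [← hBdef, hp, ← h0]⟩
  have hChA : A.Chain' Rnc := chain'_of_reduce_eq_self A (FreeGroup.reduce_toWord _)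
  have hChB : B.Chain' Rnc := chain'_of_reduce_eq_self B (FreeGroup.reduce_toWord _)
  -- group identity
  have key : (a * b * y)⁻¹ * (a * a * z) = y⁻¹ * (b⁻¹ * (a * z)) := by group
  have ha : a = FreeGroup.mk [((0 : Fin 2), true)] := rfl
  have hbinv : b⁻¹ = FreeGroup.mk [((1 : Fin 2), false)] := by
    show (FreeGroup.mk [((1 : Fin 2), true)])⁻¹ = _
    rw [FreeGroup.inv_mk]; rfl
  have hyinv : y⁻¹ = FreeGroup.mk A := (FreeGroup.mk_toWord).symm
  have hzz : z = FreeGroup.mk B := (FreeGroup.mk_toWord).symm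
  have expand : (a * b * y)⁻¹ * (a * a * z)
      = FreeGroup.mk (A ++ ((1 : Fin 2), false) :: ((0 : Fin 2), true) :: B) := by
    rw [key, hyinv, hzz, ha, hbinv, FreeGroup.mul_mk, FreeGroup.mul_mk, FreeGroup.mul_mk]
    rfl
  have expand2 : y⁻¹ * z = FreeGroup.mk (A ++ B) := by
    rw [hyinv, hzz, FreeGroup.mul_mk]
  -- chains
  have hjunc : ∀ x ∈ A.getLast?, ∀ w ∈ B.head?, Rnc x w := by
    intro x hx w hw
    rw [hlastA] at hx
    simp at hx
    subst hx
    intro hcon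
    exact hheadB w hw hcon.1.symm
  have hCh1 : (A ++ ((1 : Fin 2), false) :: ((0 : Fin 2), true) :: B).Chain' Rnc := by
    rw [List.Chain', List.isChain_append]
    refine ⟨hChA, ?_, ?_⟩
    · rw [List.isChain_cons_cons]
      refine ⟨by simp [Rnc], ?_⟩
      rw [List.isChain_cons]
      refine ⟨?_, hChB⟩
      intro w hw
      intro hcon
      exact hheadB w hw (by rw [← hcon.1])
    · intro x hx w hw
      rw [hlastA] at hx
      simp at hx
      subst hx
      simp at hw
      subst hw
      intro hcon
      exact absurd hcon.1 (by simp)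
  have hCh2 : (A ++ B).Chain' Rnc := by
    rw [List.Chain', List.isChain_append]
    exact ⟨hChA, hChB, hjunc⟩
  rw [expand, expand2, norm_of_chain' _ hCh1, norm_of_chain' _ hCh2]
  simp
  omega
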